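/- Let $S, Z \subset \mathbb{Z}_m$ with $m > 100$, $\max_{s \in S} s \le \sqrt{m}$, $|S| \le \sqrt{m}/2$, and $|Z| \le \sqrt{m}/2$. Then for every $s \in S$ there exist $x, y \in \mathbb{Z}_m \setminus Z$ such that $x + y + s \equiv 0 \pmod{m}$, and for all $z \in Z$ and all $s' \in S$, $x + z + s' \not\equiv 0 \pmod m$ and $y + z + s' \not\equiv 0 \pmod m$. -/
import Mathlib


/-- Packing lemma for Match3: given `S, Z ⊆ ℤ_m` with `m > 100`, every element of `S`
at most `√m` (as canonical representative), and `|S|, |Z| ≤ √m / 2`, for each `s ∈ S`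
there are `x, y ∉ Z` with `x + y + s ≡ 0 (mod m)` forming no other matches with `Z` and `S`. -/
theorem match3_packing (m : ℕ) [NeZero m] (hm : 100 < m)
    (S Z : Finset (ZMod m))
    (hS_small : ∀ s ∈ S, (ZMod.val s : ℝ) ≤ Real.sqrt m)
    (hScard : (S.card : ℝ) ≤ Real.sqrt m / 2)
    (hZcard : (Z.card : ℝ) ≤ Real.sqrt m / 2) :
    ∀ s ∈ S, ∃ x y : ZMod m, x ∉ Z ∧ y ∉ Z ∧
      x + y + s = 0 ∧
      (∀ z ∈ Z, ∀ s' ∈ S, x + z + s' ≠ 0 ∧ y + z + s' ≠ 0) := by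
  intro s hs
  classical
  set B : Finset (ZMod m) :=
    Z ∪ Z.image (fun z => -s - z) ∪ (Z ×ˢ S).image (fun p => -p.1 - p.2)
      ∪ (Z ×ˢ S).image (fun p => p.1 + p.2 - s) with hB
  have hcard : (B.card : ℝ) < m := by
    have h1 : B.card ≤ Z.card + Z.card + Z.card * S.card + Z.card * S.card := by
      refine (Finset.card_union_le _ _).trans ?_
      refine Nat.add_le_add ((Finset.card_union_le _ _).trans ?_)
        (Finset.card_image_le.trans (le_of_eq (Finset.card_product _ _)))
      refine Nat.add_le_add ((Finset.card_union_le _ _).trans ?_)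
        (Finset.card_image_le.trans (le_of_eq (Finset.card_product _ _)))
      exact Nat.add_le_add le_rfl Finset.card_image_le
    have hsq : Real.sqrt m * Real.sqrt m = m :=
      Real.mul_self_sqrt (by positivity)
    have hm' : (100 : ℝ) < m := by exact_mod_cast hm
    have hZ0 : (0:ℝ) ≤ Z.card := by positivity
    have hS0 : (0:ℝ) ≤ S.card := by positivity
    have hZS : (Z.card : ℝ) * S.card ≤ m / 4 := by
      calc (Z.card : ℝ) * S.card ≤ (Real.sqrt m / 2) * (Real.sqrt m / 2) := by
            apply mul_le_mul hZcard hScard hS0 (by positivity)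
        _ = m / 4 := by rw [div_mul_div_comm, hsq]; ring
    have hsqm : Real.sqrt m < m / 2 := by
      nlinarith [Real.sq_sqrt (le_of_lt (by linarith : (0:ℝ) < m)),
        Real.sqrt_nonneg (m:ℝ)]
    have : (B.card : ℝ) ≤ Z.card + Z.card + Z.card * S.card + Z.card * S.card := by
      exact_mod_cast h1
    linarith
  have hcard' : B.card < Fintype.card (ZMod m) := by
    have : (Fintype.card (ZMod m) : ℝ) = m := by
      rw [ZMod.card]
    exact_mod_cast hcard.trans_eq this.symm
  have hne : Bᶜ.Nonempty := Finset.card_pos.mp (by rw [Finset.card_compl]; omega)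
  obtain ⟨x, hx'⟩ := hne
  have hx : x ∉ B := Finset.mem_compl.mp hx'
  refine ⟨x, -x - s, ?_, ?_, by ring, ?_⟩
  · intro h
    exact hx (by simp [hB, Finset.mem_union, h])
  · intro h
    apply hx
    simp only [hB, Finset.mem_union, Finset.mem_image]
    exact Or.inl (Or.inl (Or.inr ⟨-x - s, h, by ring⟩))
  · intro z hz s' hs' 
    constructor
    · intro h
      apply hx
      simp only [hB, Finset.mem_union, Finset.mem_image, Finset.mem_product]
      exact Or.inl (Or.inr ⟨(z, s'), ⟨hz, hs'⟩, by linear_combination -h⟩)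
    · intro h
      apply hx
      simp only [hB, Finset.mem_union, Finset.mem_image, Finset.mem_product]
      exact Or.inr ⟨(z, s'), ⟨hz, hs'⟩, by linear_combination h⟩
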